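/- Let X = ({0} × [−1,1]) ∪ {(t, sin(1/t)) : t ∈ (0,1]} ⊆ ℝ² be the topologist's sine curve and let x₀ = (0, −1), an endpoint of the limit segment {0} × [−1,1]. Then the pointed compactum (X, x₀) is not a PAANR (even though X itself is an AANR). -/

import Mathlib

open Topology

universe u v

/-- A compactum `X` is an *approximative absolute neighborhood retract* (AANR). -/
def IsAANR (X : Type u) [TopologicalSpace X] : Prop :=
  ∀ (Y : Type v) [MetricSpace Y] [CompactSpace Y] (θ : X → Y),
    IsEmbedding θ →
    ∀ ε > (0 : ℝ), ∃ δ > (0 : ℝ), ∃ r : Y → X,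
      ContinuousOn r {y | Metric.infDist y (Set.range θ) ≤ δ} ∧
      ∀ x : X, dist (θ (r (θ x))) (θ x) ≤ ε

/-- A pointed compactum `(X, x₀)` is a *pointed approximative absolute neighborhood
retract* (PAANR) if for every compact metric space `Y`, every topological embedding
`θ : X → Y`, and every `ε > 0`, there exist `δ > 0` and a continuous map
`r : U_δ → X` (where `U_δ = {y | dist (y, θ(X)) ≤ δ}`) with `r (θ x₀) = x₀` which moves
the points of `θ(X)` by at most `ε`. -/
def IsPAANR (X : Type u) [TopologicalSpace X] (x₀ : X) : Prop :=
  ∀ (Y : Type v) [MetricSpace Y] [CompactSpace Y] (θ : X → Y),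
    IsEmbedding θ →
    ∀ ε > (0 : ℝ), ∃ δ > (0 : ℝ), ∃ r : Y → X,
      ContinuousOn r {y | Metric.infDist y (Set.range θ) ≤ δ} ∧
      r (θ x₀) = x₀ ∧
      ∀ x : X, dist (θ (r (θ x))) (θ x) ≤ ε

/-- The topologist's sine curve
`({0} × [−1,1]) ∪ {(t, sin(1/t)) : t ∈ (0,1]} ⊆ ℝ²`. -/
noncomputable def sineCurve : Set (ℝ × ℝ) :=
  {p : ℝ × ℝ | p.1 = 0 ∧ p.2 ∈ Set.Icc (-1 : ℝ) 1} ∪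
    {p : ℝ × ℝ | ∃ t : ℝ, 0 < t ∧ t ≤ 1 ∧ p = (t, Real.sin (1 / t))}

/-- The endpoint `x₀ = (0, −1)` of the limit segment `{0} × [−1,1]` of the topologist's
sine curve. -/
noncomputable def sineCurveLimitPoint : ↥sineCurve :=
  ⟨((0 : ℝ), (-1 : ℝ)), Or.inl ⟨rfl, by norm_num⟩⟩

section Aux

open Set Filter Real

lemma mem_sineCurve_curve {t : ℝ} (h0 : 0 < t) (h1 : t ≤ 1) :
    ((t, Real.sin (1/t)) : ℝ × ℝ) ∈ sineCurve := Or.inr ⟨t, h0, h1, rfl⟩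

lemma sineCurve_cases {p : ℝ × ℝ} (hp : p ∈ sineCurve) :
    (p.1 = 0 ∧ p.2 ∈ Set.Icc (-1:ℝ) 1) ∨ (0 < p.1 ∧ p.1 ≤ 1 ∧ p.2 = Real.sin (1/p.1)) := by
  rcases hp with h | ⟨t, ht0, ht1, rfl⟩
  · exact Or.inl h
  · exact Or.inr ⟨ht0, ht1, rfl⟩

lemma sineCurve_bounds {p : ℝ × ℝ} (hp : p ∈ sineCurve) :
    0 ≤ p.1 ∧ p.1 ≤ 1 ∧ -1 ≤ p.2 ∧ p.2 ≤ 1 := by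
  rcases sineCurve_cases hp with ⟨h1, h2⟩ | ⟨h1, h2, h3⟩
  · exact ⟨le_of_eq h1.symm, by rw [h1]; norm_num, h2.1, h2.2⟩
  · exact ⟨h1.le, h2, by rw [h3]; exact Real.neg_one_le_sin _, by rw [h3]; exact Real.sin_le_one _⟩

lemma isClosed_sineCurve : IsClosed sineCurve := by
  apply IsSeqClosed.isClosed
  intro u p hu hup
  have h1 : Filter.Tendsto (fun n => (u n).1) atTop (𝓝 p.1) :=
    (continuous_fst.continuousAt (x := p)).tendsto.comp hup
  have h2 : Filter.Tendsto (fun n => (u n).2) atTop (𝓝 p.2) :=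
    (continuous_snd.continuousAt (x := p)).tendsto.comp hup
  have hb : ∀ n, 0 ≤ (u n).1 ∧ (u n).1 ≤ 1 ∧ -1 ≤ (u n).2 ∧ (u n).2 ≤ 1 :=
    fun n => sineCurve_bounds (hu n)
  have hp1 : 0 ≤ p.1 := ge_of_tendsto' h1 (fun n => (hb n).1)
  have hp2 : p.1 ≤ 1 := le_of_tendsto' h1 (fun n => (hb n).2.1)
  have hp3 : -1 ≤ p.2 := ge_of_tendsto' h2 (fun n => (hb n).2.2.1)
  have hp4 : p.2 ≤ 1 := le_of_tendsto' h2 (fun n => (hb n).2.2.2)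
  rcases eq_or_lt_of_le hp1 with h0 | h0
  · exact Or.inl ⟨h0.symm, hp3, hp4⟩
  · have hev : ∀ᶠ n in atTop, 0 < (u n).1 := h1.eventually (eventually_gt_nhds h0)
    have hev2 : ∀ᶠ n in atTop, (u n).2 = Real.sin (1/(u n).1) := by
      filter_upwards [hev] with n hn
      rcases sineCurve_cases (hu n) with ⟨h, _⟩ | ⟨_, _, h⟩
      · exact absurd h hn.ne'
      · exact h
    have hcont : ContinuousAt (fun x : ℝ => Real.sin (1/x)) p.1 :=
      Real.continuous_sin.continuousAt.comp ((continuousAt_const.div continuousAt_id h0.ne'))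
    have h3 : Filter.Tendsto (fun n => Real.sin (1/(u n).1)) atTop (𝓝 (Real.sin (1/p.1))) :=
      hcont.tendsto.comp h1
    have : p.2 = Real.sin (1/p.1) := tendsto_nhds_unique (h2.congr' hev2) h3
    exact Or.inr ⟨p.1, h0, hp2, Prod.ext rfl this⟩

lemma isCompact_sineCurve : IsCompact sineCurve := by
  refine (isCompact_Icc (a := ((0:ℝ),(-1:ℝ))) (b := ((1:ℝ),(1:ℝ)))).of_isClosed_subset
    isClosed_sineCurve ?_
  intro p hp
  obtain ⟨a1, a2, a3, a4⟩ := sineCurve_bounds hp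
  exact ⟨⟨a1, a3⟩, ⟨a2, a4⟩⟩

lemma sin_peak (j : ℤ) : Real.sin (2*π*j + π/2) = 1 := by
  have e : 2*π*j + π/2 = π/2 + j*(2*π) := by ring
  rw [e, Real.sin_add_int_mul_two_pi, Real.sin_pi_div_two]

lemma sin_trough (j : ℤ) : Real.sin (2*π*j - π/2) = -1 := by
  have e : 2*π*j - π/2 = -(π/2) + j*(2*π) := by ring
  rw [e, Real.sin_add_int_mul_two_pi, Real.sin_neg, Real.sin_pi_div_two]

lemma exists_small_peak (c : ℝ) (hc : 0 < c) : ∃ t, 0 < t ∧ t < c ∧ Real.sin (1/t) = 1 := by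
  set j : ℕ := ⌈1/c⌉₊ + 1 with hj
  have hjc : (1:ℝ)/c < j := by
    have := Nat.le_ceil (1/c)
    push_cast [hj]; linarith
  have hA : (0:ℝ) < 2*π*j + π/2 := by
    have : (0:ℝ) ≤ 2*π*j := by positivity
    linarith [Real.pi_pos]
  refine ⟨(2*π*j + π/2)⁻¹, by positivity, ?_, ?_⟩
  · rw [← one_div, one_div_lt hA hc]
    have hpi := Real.pi_gt_three
    nlinarith
  · rw [one_div, inv_inv]
    exact_mod_cast sin_peak j

lemma exists_small_trough (c : ℝ) (hc : 0 < c) : ∃ t, 0 < t ∧ t < c ∧ Real.sin (1/t) = -1 := by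
  set j : ℕ := ⌈1/c⌉₊ + 1 with hj
  have hj1 : (1:ℝ) ≤ j := by push_cast [hj]; linarith [Nat.cast_nonneg (α := ℝ) ⌈1/c⌉₊]
  have hjc : (1:ℝ)/c < j := by
    have := Nat.le_ceil (1/c)
    push_cast [hj]; linarith
  have hpi := Real.pi_gt_three
  have hA : (1:ℝ)/c < 2*π*j - π/2 := by nlinarith
  have hA0 : (0:ℝ) < 2*π*j - π/2 := lt_trans (by positivity) hA
  refine ⟨(2*π*j - π/2)⁻¹, by positivity, ?_, ?_⟩
  · rw [← one_div, one_div_lt hA0 hc]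
    exact hA
  · rw [one_div, inv_inv]
    exact_mod_cast sin_trough j

lemma sineCurve_no_escape {h : ℝ → ℝ × ℝ} (hc : ContinuousOn h (Set.Icc 0 1))
    (hmem : ∀ s ∈ Set.Icc (0:ℝ) 1, h s ∈ sineCurve) (h0 : (h 0).1 = 0) :
    (h 1).1 = 0 := by
  by_contra hne
  have hf : ContinuousOn (fun s => (h s).1) (Set.Icc 0 1) := continuous_fst.comp_continuousOn hc
  have hnonneg : ∀ s ∈ Set.Icc (0:ℝ) 1, 0 ≤ (h s).1 := fun s hs => (sineCurve_bounds (hmem s hs)).1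
  have h1pos : 0 < (h 1).1 :=
    lt_of_le_of_ne (hnonneg 1 (by norm_num)) (Ne.symm hne)
  set T : Set ℝ := {s ∈ Set.Icc (0:ℝ) 1 | (h s).1 = 0} with hT
  have hTne : T.Nonempty := ⟨0, ⟨le_refl 0, zero_le_one⟩, h0⟩
  have hTbdd : BddAbove T := ⟨1, fun s hs => hs.1.2⟩
  have hTclosed : IsClosed T :=
    hf.preimage_isClosed_of_isClosed isClosed_Icc isClosed_singleton
  set c : ℝ := sSup T with hc'
  have hcT : c ∈ T := hTclosed.csSup_mem hTne hTbdd
  have hc01 : c ∈ Set.Icc (0:ℝ) 1 := hcT.1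
  have hfc : (h c).1 = 0 := hcT.2
  have hclt : c < 1 := lt_of_le_of_ne hc01.2 (fun he => by rw [he] at hfc; exact h1pos.ne' hfc)
  have key : ∀ v : ℝ, (∀ e, 0 < e → ∃ t, 0 < t ∧ t < e ∧ Real.sin (1/t) = v) → (h c).2 = v := by
    intro v hv
    have hτ : ∀ n : ℕ, ∃ τ ∈ Set.Icc c (c + (1-c)/(n+1)), (h τ).2 = v := by
      intro n
      set s : ℝ := c + (1-c)/(n+1) with hs
      have hn1 : (0:ℝ) < (n:ℝ) + 1 := by positivity
      have hgap : 0 < (1-c)/((n:ℝ)+1) := div_pos (by linarith) hn1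
      have hslt : c < s := by rw [hs]; linarith
      have hs01 : s ∈ Set.Icc (0:ℝ) 1 := by
        constructor
        · linarith [hc01.1]
        · rw [hs]
          have : (1-c)/((n:ℝ)+1) ≤ (1-c)/1 :=
            div_le_div_of_nonneg_left (by linarith) one_pos (by linarith)
          linarith
      have hfs : 0 < (h s).1 := by
        rcases lt_or_eq_of_le (hnonneg s hs01) with h' | h'
        · exact h'
        · exact absurd (le_csSup hTbdd ⟨hs01, h'.symm⟩) (not_le.mpr hslt)
      obtain ⟨t, ht0, htlt, htv⟩ := hv _ hfs
      have hIcc : Set.Icc c s ⊆ Set.Icc (0:ℝ) 1 := Set.Icc_subset_Icc hc01.1 hs01.2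
      have hIVT := intermediate_value_Icc hslt.le (hf.mono hIcc)
      obtain ⟨τ, hτmem, hτval⟩ := hIVT (by rw [hfc]; exact ⟨ht0.le, htlt.le⟩ :
        t ∈ Set.Icc ((h c).1) ((h s).1))
      refine ⟨τ, hτmem, ?_⟩
      have hτ01 : τ ∈ Set.Icc (0:ℝ) 1 := hIcc hτmem
      simp only [] at hτval
      rcases sineCurve_cases (hmem τ hτ01) with ⟨h', _⟩ | ⟨_, _, h'⟩
      · rw [hτval] at h'; exact absurd h' ht0.ne'
      · rw [h', hτval, htv]
    choose τ hτmem hτval using hτ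
    have hτtend : Tendsto τ atTop (𝓝 c) := by
      have hub : Tendsto (fun n : ℕ => c + (1-c)/(n+1)) atTop (𝓝 c) := by
        have : Tendsto (fun n : ℕ => (1-c)/(n+1)) atTop (𝓝 0) := by
          simp_rw [div_eq_mul_inv]
          have := tendsto_one_div_add_atTop_nhds_zero_nat (𝕜 := ℝ)
          simp_rw [one_div] at this
          simpa using this.const_mul (1-c)
        simpa using tendsto_const_nhds.add this
      exact tendsto_of_tendsto_of_tendsto_of_le_of_le tendsto_const_nhds hub
        (fun n => (hτmem n).1) (fun n => (hτmem n).2)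
    have hτ01 : ∀ n, τ n ∈ Set.Icc (0:ℝ) 1 := by
      intro n
      constructor
      · linarith [(hτmem n).1, hc01.1]
      · have hn1 : (0:ℝ) < (n:ℝ) + 1 := by positivity
        have h1 : (1-c)/((n:ℝ)+1) ≤ (1-c)/1 :=
          div_le_div_of_nonneg_left (by linarith [hc01.2]) one_pos (by linarith)
        have h2 := (hτmem n).2
        linarith
    have hwat : Tendsto (fun n => h (τ n)) atTop (𝓝 (h c)) :=
      (hc c hc01).tendsto.comp
        (tendsto_nhdsWithin_of_tendsto_nhds_of_eventually_within τ hτtend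
          (Eventually.of_forall hτ01))
    have h2t : Tendsto (fun n => (h (τ n)).2) atTop (𝓝 (h c).2) :=
      (continuous_snd.continuousAt.tendsto.comp hwat)
    exact tendsto_nhds_unique (h2t.congr (fun n => (hτval n))) tendsto_const_nhds
  have e1 : (h c).2 = 1 := key 1 (fun e he => exists_small_peak e he)
  have e2 : (h c).2 = -1 := key (-1) (fun e he => exists_small_trough e he)
  rw [e1] at e2; norm_num at e2

lemma near_bottom {s : ℝ} (hs0 : 0 ≤ s) (hs1 : s ≤ 1) :
    ∃ q ∈ sineCurve, dist ((s, (-1:ℝ)) : ℝ × ℝ) q ≤ 2*π*s^2 := by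
  rcases eq_or_lt_of_le hs0 with h0 | h0
  · refine ⟨((0:ℝ), (-1:ℝ)), Or.inl ⟨rfl, by norm_num⟩, ?_⟩
    rw [← h0]
    simp [Prod.dist_eq]
  · set j : ℕ := ⌈(1/s + π/2)/(2*π)⌉₊ with hj
    have hpi := Real.pi_pos
    have harg : 0 ≤ (1/s + π/2)/(2*π) := by positivity
    have hjge : (1/s + π/2)/(2*π) ≤ j := Nat.le_ceil _
    have hjlt : (j:ℝ) < (1/s + π/2)/(2*π) + 1 := Nat.ceil_lt_add_one harg
    set A : ℝ := 2*π*j - π/2 with hA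
    have hAge : 1/s ≤ A := by
      have : 1/s + π/2 ≤ 2*π*j := by
        rw [div_le_iff₀ (by positivity)] at hjge
        linarith [hjge]
      linarith
    have hAlt : A < 1/s + 2*π := by
      have h2 : 2*π*((1/s + π/2)/(2*π)) = 1/s + π/2 := by field_simp
      have h3 := mul_lt_mul_of_pos_left hjlt (by positivity : (0:ℝ) < 2*π)
      rw [mul_add, h2] at h3
      simp only [mul_one] at h3
      linarith
    have hA0 : 0 < A := lt_of_lt_of_le (by positivity) hAge
    set b : ℝ := A⁻¹ with hb
    have hb0 : 0 < b := by positivity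
    clear_value A b
    have hbs : b ≤ s := by
      rw [hb, ← one_div, one_div_le hA0 h0]
      exact hAge
    have hAb : A * b = 1 := by rw [hb]; exact mul_inv_cancel₀ hA0.ne'
    have hsb : s - b ≤ 2*π*s^2 := by
      by_contra hcon
      push_neg at hcon
      have k1 : A*(2*π*s^2) < A*(s-b) := mul_lt_mul_of_pos_left hcon hA0
      have k2 : A*(s-b) = A*s - 1 := by rw [mul_sub, hAb]
      have h4 : A*s < (1/s+2*π)*s := mul_lt_mul_of_pos_right hAlt h0
      have h5 : (1/s+2*π)*s = 1 + 2*π*s := by field_simp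
      have h6 : (1/s)*s^2 ≤ A*s^2 := mul_le_mul_of_nonneg_right hAge (sq_nonneg s)
      have h7 : (1/s)*s^2 = s := by field_simp
      have h6Q : s ≤ A*s^2 := by linarith [h6, h7]
      have h8 : π*s ≤ π*(A*s^2) := mul_le_mul_of_nonneg_left h6Q hpi.le
      linarith [k1, k2, h4, h5, h8]
    refine ⟨(b, Real.sin (1/b)), mem_sineCurve_curve hb0 (hbs.trans hs1), ?_⟩
    have hsin : Real.sin (1/b) = -1 := by
      rw [hb, one_div, inv_inv, hA]
      exact_mod_cast sin_trough j
    rw [hsin, Prod.dist_eq]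
    simp only [dist_self]
    rw [max_eq_left dist_nonneg, Real.dist_eq, abs_of_nonneg (by linarith : (0:ℝ) ≤ s - b)]
    exact hsb

end Aux

section NotPAANR
open Set Filter Real

lemma sineCurve_subset_box : sineCurve ⊆ Set.Icc (((0:ℝ),(-2:ℝ)) : ℝ×ℝ) ((1:ℝ),(2:ℝ)) := by
  intro p hp
  obtain ⟨a1, a2, a3, a4⟩ := sineCurve_bounds hp
  simp only [Set.mem_Icc, Prod.mk_le_mk]
  exact ⟨⟨a1, by show (-2:ℝ) ≤ p.2; linarith⟩, a2, by show p.2 ≤ (2:ℝ); linarith⟩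

lemma sineCurve_not_PAANR : ¬ IsPAANR.{0, v} ↥sineCurve sineCurveLimitPoint := by
  intro H
  have hpi := Real.pi_pos
  haveI : CompactSpace ↥(Set.Icc (((0:ℝ),(-2:ℝ)) : ℝ×ℝ) ((1:ℝ),(2:ℝ))) :=
    isCompact_iff_compactSpace.mp isCompact_Icc
  set θ : ↥sineCurve → ULift.{v} ↥(Set.Icc (((0:ℝ),(-2:ℝ)) : ℝ×ℝ) ((1:ℝ),(2:ℝ))) :=
    fun x => ULift.up ⟨(x : ℝ × ℝ), sineCurve_subset_box x.2⟩ with hθ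
  have hiso : Isometry θ := fun x y => rfl
  obtain ⟨δ, hδ, r, hrcont, hrfix, hrmove⟩ := H _ θ hiso.isEmbedding (1/2) (by norm_num)
  set m : ℕ := ⌈2*π/δ⌉₊ + 1 with hm
  have hm1 : (1:ℝ) ≤ m := by
    push_cast [hm]; linarith [Nat.cast_nonneg (α := ℝ) ⌈2*π/δ⌉₊]
  have hmδ : 2*π/δ ≤ m := by
    push_cast [hm]; linarith [Nat.le_ceil (2*π/δ)]
  set c : ℝ := (2*π*m - π/2)⁻¹ with hc
  have hA0 : (0:ℝ) < 2*π*m - π/2 := by nlinarith [Real.pi_gt_three]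
  have hAm : (m:ℝ) ≤ 2*π*m - π/2 := by nlinarith [Real.pi_gt_three]
  have hc0 : 0 < c := by rw [hc]; positivity
  have hcm : c ≤ 1/m := by
    rw [hc, ← one_div]
    exact one_div_le_one_div_of_le (by linarith) hAm
  have hc1 : c ≤ 1 := le_trans hcm (by rw [div_le_one (by linarith)]; exact hm1)
  have hsinc : Real.sin (1/c) = -1 := by
    rw [hc, one_div, inv_inv]
    exact_mod_cast sin_trough (m : ℤ)
  have hδc : 2*π*c ≤ δ := by
    have h2' : 2*π ≤ δ*m := by
      rw [div_le_iff₀ hδ] at hmδ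
      linarith
    have h1 : 2*π*c ≤ 2*π*(1/m) :=
      mul_le_mul_of_nonneg_left hcm (by positivity)
    have h2 : 2*π*(1/m) ≤ δ := by
      rw [mul_one_div, div_le_iff₀ (by linarith : (0:ℝ) < (m:ℝ))]
      linarith
    linarith
  set γ : ℝ → ℝ × ℝ :=
    fun s => (max 0 (min 1 s), Real.sin (1 / max (max 0 (min 1 s)) c)) with hγ
  have hproj : ∀ s ∈ Set.Icc (0:ℝ) 1, max 0 (min 1 s) = s := by
    intro s hs; rw [min_eq_right hs.2, max_eq_right hs.1]
  have hpc : Continuous (fun s : ℝ => max 0 (min 1 s)) :=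
    continuous_const.max (continuous_const.min continuous_id)
  have hγcont : Continuous γ := by
    refine hpc.prodMk ?_
    exact Real.continuous_sin.comp (continuous_const.div (hpc.max continuous_const)
      (fun s => (lt_of_lt_of_le hc0 (le_max_right _ _)).ne'))
  have hγbox : ∀ s, γ s ∈ Set.Icc (((0:ℝ),(-2:ℝ)) : ℝ×ℝ) ((1:ℝ),(2:ℝ)) := by
    intro s
    simp only [Set.mem_Icc, hγ, Prod.mk_le_mk]
    refine ⟨⟨le_max_left _ _, by linarith [Real.neg_one_le_sin (1 / max (max 0 (min 1 s)) c)]⟩,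
      ⟨max_le (by norm_num) (min_le_left _ _), by
        linarith [Real.sin_le_one (1 / max (max 0 (min 1 s)) c)]⟩⟩
  set γ' : ℝ → ULift.{v} ↥(Set.Icc (((0:ℝ),(-2:ℝ)) : ℝ×ℝ) ((1:ℝ),(2:ℝ))) :=
    fun s => ULift.up ⟨γ s, hγbox s⟩ with hγ'
  have hγ'cont : Continuous γ' :=
    (Homeomorph.ulift.symm.continuous).comp (hγcont.subtype_mk _)
  have hγ'U : ∀ s ∈ Set.Icc (0:ℝ) 1, γ' s ∈ {y | Metric.infDist y (Set.range θ) ≤ δ} := by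
    intro s hs
    have hq : ∃ q ∈ sineCurve, dist (γ s) q ≤ δ := by
      rcases le_or_gt c s with hcs | hsc
      · refine ⟨(s, Real.sin (1/s)), mem_sineCurve_curve (lt_of_lt_of_le hc0 hcs) hs.2, ?_⟩
        have he : γ s = (s, Real.sin (1/s)) := by
          rw [hγ]; simp only
          rw [hproj s hs, max_eq_left hcs]
        rw [he, dist_self]; linarith
      · obtain ⟨q, hqm, hdq⟩ := near_bottom hs.1 hs.2
        have he : γ s = (s, (-1:ℝ)) := by
          rw [hγ]; simp only
          rw [hproj s hs, max_eq_right hsc.le, hsinc]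
        refine ⟨q, hqm, ?_⟩
        rw [he]
        refine le_trans hdq ?_
        have hss : s*s ≤ c*c := mul_le_mul hsc.le hsc.le hs.1 hc0.le
        have hcc : c*c ≤ c := mul_le_of_le_one_left hc0.le hc1
        nlinarith
    obtain ⟨q, hqmem, hdq⟩ := hq
    show Metric.infDist (γ' s) (Set.range θ) ≤ δ
    calc Metric.infDist (γ' s) (Set.range θ) ≤ dist (γ' s) (θ ⟨q, hqmem⟩) :=
        Metric.infDist_le_dist_of_mem (Set.mem_range_self _)
      _ = dist (γ s) q := rfl
      _ ≤ δ := hdq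
  have hHcont : ContinuousOn (fun s => ((r (γ' s) : ↥sineCurve) : ℝ × ℝ)) (Set.Icc 0 1) :=
    continuous_subtype_val.comp_continuousOn (hrcont.comp hγ'cont.continuousOn hγ'U)
  have hHmem : ∀ s ∈ Set.Icc (0:ℝ) 1, ((r (γ' s) : ↥sineCurve) : ℝ×ℝ) ∈ sineCurve :=
    fun s _ => (r (γ' s)).2
  have hγ'0 : γ' 0 = θ sineCurveLimitPoint := by
    rw [hγ', hθ]
    apply congrArg ULift.up
    apply Subtype.ext
    show γ 0 = ((0:ℝ), (-1:ℝ))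
    have e1 : max (0:ℝ) (min 1 0) = 0 := by norm_num
    rw [hγ]; simp only
    rw [e1, max_eq_right hc0.le, hsinc]
  have hH0 : ((r (γ' 0) : ↥sineCurve) : ℝ×ℝ).1 = 0 := by
    rw [hγ'0, hrfix]; rfl
  set x₁ : ↥sineCurve := ⟨((1:ℝ), Real.sin (1/1)), mem_sineCurve_curve one_pos le_rfl⟩ with hx₁
  have hγ'1 : γ' 1 = θ x₁ := by
    rw [hγ', hθ]
    apply congrArg ULift.up
    apply Subtype.ext
    show γ 1 = ((1:ℝ), Real.sin (1/1))
    have e1 : max (0:ℝ) (min 1 1) = 1 := by norm_num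
    rw [hγ]; simp only
    rw [e1, max_eq_left hc1]
  have hH1 : (0:ℝ) < ((r (γ' 1) : ↥sineCurve) : ℝ×ℝ).1 := by
    have hmv := hrmove x₁
    have he : dist (θ (r (θ x₁))) (θ x₁)
        = dist ((r (θ x₁) : ↥sineCurve) : ℝ×ℝ) (((1:ℝ), Real.sin (1/1)) : ℝ×ℝ) := rfl
    rw [he, Prod.dist_eq] at hmv
    have h1 := le_trans (le_max_left _ _) hmv
    simp only [Real.dist_eq] at h1
    have h2 := (abs_le.mp h1).1
    rw [hγ'1]
    linarith
  exact hH1.ne'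
    (sineCurve_no_escape hHcont hHmem hH0)

end NotPAANR

section AANR
open Set Filter Real

lemma sineCurve_AANR : IsAANR.{0, v} ↥sineCurve := by
  intro Y _ _ θ hθ ε hε
  haveI : CompactSpace ↥sineCurve := isCompact_iff_compactSpace.mp isCompact_sineCurve
  have hθc : Continuous θ := hθ.continuous
  obtain ⟨η, hη, hηimp⟩ :=
    Metric.uniformContinuous_iff.mp (CompactSpace.uniformContinuous_of_continuous hθc) ε hε
  have hpi := Real.pi_pos
  have hpi3 := Real.pi_gt_three
  set k : ℕ := ⌈1/η⌉₊ + 1 with hk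
  have hk1 : (1:ℝ) ≤ k := by
    push_cast [hk]; linarith [Nat.cast_nonneg (α := ℝ) ⌈1/η⌉₊]
  have hkη : 1/η < k := by
    push_cast [hk]; linarith [Nat.le_ceil (1/η)]
  set a : ℝ := (2*π*k + π/2)⁻¹ with ha
  set b : ℝ := (2*π*k - π/2)⁻¹ with hb
  have hB0 : (0:ℝ) < 2*π*k - π/2 := by nlinarith
  have hBk : (k:ℝ) ≤ 2*π*k - π/2 := by nlinarith
  have ha0 : 0 < a := by rw [ha]; positivity
  have hb0 : 0 < b := by rw [hb]; positivity
  have hbη : b < η := by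
    rw [hb, ← one_div, one_div_lt hB0 hη]
    linarith
  have hb1 : b ≤ 1 := by
    rw [hb, ← one_div]
    calc 1/(2*π*k - π/2) ≤ 1/1 := one_div_le_one_div_of_le one_pos (by linarith)
      _ = 1 := by norm_num
  set tk : ℝ → ℝ := fun y => (2*π*k + Real.arcsin y)⁻¹ with htk
  have hden : ∀ y, 0 < 2*π*k + Real.arcsin y := by
    intro y
    have h1 := Real.neg_pi_div_two_le_arcsin y
    nlinarith
  have htk_pos : ∀ y, 0 < tk y := by
    intro y
    rw [htk]; simp only
    exact inv_pos.mpr (hden y)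
  have htk_a : ∀ y, a ≤ tk y := by
    intro y
    rw [htk, ha]; simp only
    apply inv_anti₀ (hden y)
    linarith [Real.arcsin_le_pi_div_two y]
  have htk_b : ∀ y, tk y ≤ b := by
    intro y
    rw [htk, hb]; simp only
    apply inv_anti₀ hB0
    linarith [Real.neg_pi_div_two_le_arcsin y]
  have htk_cont : Continuous tk := by
    rw [htk]
    exact (continuous_const.add Real.continuous_arcsin).inv₀ (fun y => (hden y).ne')
  have htk_sin : ∀ y ∈ Set.Icc (-1:ℝ) 1, Real.sin (1/(tk y)) = y := by
    intro y hy
    rw [htk]; simp only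
    rw [one_div, inv_inv]
    have e1 : 2*π*k + Real.arcsin y = Real.arcsin y + (k:ℤ)*(2*π) := by push_cast; ring
    rw [e1, Real.sin_add_int_mul_two_pi, Real.sin_arcsin hy.1 hy.2]
  set w : ↥sineCurve → ℝ := fun x => max ((x:ℝ×ℝ).1) (tk ((x:ℝ×ℝ).2)) with hw
  have hw_cont : Continuous w := by
    rw [hw]
    exact (continuous_fst.comp continuous_subtype_val).max
      (htk_cont.comp (continuous_snd.comp continuous_subtype_val))
  have hw_mem : ∀ x : ↥sineCurve, w x ∈ Set.Icc a 1 := by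
    intro x
    obtain ⟨b1, b2, b3, b4⟩ := sineCurve_bounds x.2
    exact ⟨le_trans (htk_a _) (le_max_right _ _),
      max_le b2 (le_trans (htk_b _) hb1)⟩
  have hw_pos : ∀ x, 0 < w x := fun x => lt_of_lt_of_le ha0 (hw_mem x).1
  have hF : ∀ x : ↥sineCurve, ((w x, Real.sin (1/(w x))) : ℝ×ℝ) ∈ sineCurve ∧
      dist ((w x, Real.sin (1/(w x))) : ℝ×ℝ) (x:ℝ×ℝ) ≤ b := by
    intro x
    obtain ⟨b1, b2, b3, b4⟩ := sineCurve_bounds x.2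
    refine ⟨mem_sineCurve_curve (hw_pos x) (hw_mem x).2, ?_⟩
    rcases max_cases ((x:ℝ×ℝ).1) (tk ((x:ℝ×ℝ).2)) with ⟨hmax, hge⟩ | ⟨hmax, hlt⟩
    · have hx1pos : 0 < (x:ℝ×ℝ).1 := lt_of_lt_of_le (htk_pos _) hge
      rcases sineCurve_cases x.2 with ⟨h', _⟩ | ⟨_, _, h'⟩
      · exact absurd h' hx1pos.ne'
      · have hFx : ((w x, Real.sin (1/(w x))) : ℝ×ℝ) = (x:ℝ×ℝ) := by
          have hwx : w x = (x:ℝ×ℝ).1 := by rw [hw]; simp only; exact hmax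
          rw [hwx, ← h']
        rw [hFx, dist_self]
        exact hb0.le
    · have hwx : w x = tk ((x:ℝ×ℝ).2) := by rw [hw]; simp only; exact hmax
      have hsin2 : Real.sin (1/(w x)) = (x:ℝ×ℝ).2 := by
        rw [hwx]; exact htk_sin _ ⟨b3, b4⟩
      rw [hsin2, Prod.dist_eq]
      simp only [dist_self]
      rw [max_eq_left dist_nonneg, Real.dist_eq]
      rw [hwx]
      rw [abs_of_nonneg (by linarith : (0:ℝ) ≤ tk ((x:ℝ×ℝ).2) - (x:ℝ×ℝ).1)]
      linarith [htk_b ((x:ℝ×ℝ).2)]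
  -- Tietze extension of w through θ
  have hclosed : IsClosed (Set.range θ) := (isCompact_range hθc).isClosed
  set e : ↥sineCurve ≃ₜ Set.range θ := IsEmbedding.toHomeomorph hθ with he
  set f : C(Set.range θ, ℝ) := ⟨fun z => w (e.symm z), hw_cont.comp e.symm.continuous⟩ with hf
  obtain ⟨g, hg⟩ := ContinuousMap.exists_restrict_eq hclosed f
  set w' : Y → ℝ := fun z => max a (min 1 (g z)) with hw'
  have hw'pos : ∀ z, 0 < w' z := fun z => lt_of_lt_of_le ha0 (le_max_left _ _)
  have hw'le1 : ∀ z, w' z ≤ 1 := by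
    intro z
    rw [hw']; simp only
    exact max_le (le_trans (by linarith [htk_a 0, htk_b 0]) hb1) (min_le_left _ _)
  set r : Y → ↥sineCurve :=
    fun z => ⟨(w' z, Real.sin (1/(w' z))), mem_sineCurve_curve (hw'pos z) (hw'le1 z)⟩ with hr
  have hw'c : Continuous w' := continuous_const.max (continuous_const.min g.continuous)
  have hrc : Continuous r := by
    apply Continuous.subtype_mk
    exact hw'c.prodMk
      (Real.continuous_sin.comp (continuous_const.div hw'c (fun z => (hw'pos z).ne')))
  have hrθ : ∀ x : ↥sineCurve, r (θ x) = ⟨(w x, Real.sin (1/(w x))), (hF x).1⟩ := by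
    intro x
    have hz : g (θ x) = w x := by
      have h2 := congrFun (congrArg DFunLike.coe hg) ⟨θ x, Set.mem_range_self x⟩
      have h3 : g (θ x) = w (e.symm ⟨θ x, Set.mem_range_self x⟩) := h2
      have h4 : (⟨θ x, Set.mem_range_self x⟩ : Set.range θ) = e x := Subtype.ext rfl
      rw [h4, e.symm_apply_apply] at h3
      exact h3
    have hwval : w' (θ x) = w x := by
      rw [hw']; simp only
      rw [hz, min_eq_right (hw_mem x).2, max_eq_right (hw_mem x).1]
    apply Subtype.ext
    show ((w' (θ x), Real.sin (1/(w' (θ x)))) : ℝ×ℝ) = (w x, Real.sin (1/(w x)))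
    rw [hwval]
  refine ⟨1, one_pos, r, hrc.continuousOn, ?_⟩
  intro x
  rw [hrθ x]
  apply le_of_lt
  apply hηimp
  rw [Subtype.dist_eq]
  exact lt_of_le_of_lt (hF x).2 (lt_of_lt_of_le hbη le_rfl)

end AANR

/-- The topologist's sine curve pointed at `x₀ = (0, −1)`, an endpoint of the limit
segment, is not a PAANR, even though the underlying space is an AANR. -/
theorem sineCurve_not_isPAANR_limitPoint :
    ¬ IsPAANR ↥sineCurve sineCurveLimitPoint ∧ IsAANR ↥sineCurve :=
  ⟨sineCurve_not_PAANR, sineCurve_AANR⟩
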